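/- arXiv:2601.19999 — 2 statements merged into one kernel-verified Lean document; each statement's English description precedes it below -/
import Mathlib

section
/- If there exists a bowtie of functions, then there exists a nontrivial automorphism of the Boolean algebra P(ω)/Fin. -/
open Set

/-- The first uncountable ordinal `ω₁`. -/
noncomputable def omega1 : Ordinal := (Cardinal.aleph 1).ord

/-- `A =* B` : the symmetric difference `(A \ B) ∪ (B \ A)` is finite. -/
def EqStar (A B : Set ℕ) : Prop := ((A \ B) ∪ (B \ A)).Finite

/-- `A ⊆* B` : `A \ B` is finite. -/
def SubStar (A B : Set ℕ) : Prop := (A \ B).Finite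

/-- A bowtie of functions: a sequence `⟨f_α : α < ω₁⟩` where each `f_α` is a
fixed-point-free permutation of a set `D_α ⊆ ℕ`, satisfying conditions
(i), (ii), (iii) of the definition.  (The functions are represented as total
functions on `ℕ`; only their behavior on `D_α` matters.) -/
structure BowtieFn where
  /-- the domains `D_α` -/
  D : Ordinal → Set ℕ
  /-- the functions `f_α` (total functions; only values on `D α` matter) -/
  f : Ordinal → ℕ → ℕ
  /-- each `f_α` is a permutation of `D_α` -/
  bijOn : ∀ α < omega1, Set.BijOn (f α) (D α) (D α)
  /-- each `f_α` is fixed-point-free on `D_α` -/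
  fixedPointFree : ∀ α < omega1, ∀ x ∈ D α, f α x ≠ x
  /-- (i) `D_α ⊆* D_β` for `α < β < ω₁` -/
  sub : ∀ α β, α < β → β < omega1 → SubStar (D α) (D β)
  /-- (i) `D_β \ D_α` is infinite for `α < β < ω₁` -/
  diff_infinite : ∀ α β, α < β → β < omega1 → (D β \ D α).Infinite
  /-- (ii) `f_α =* f_β ↾ D_α` for `α ≤ β < ω₁` -/
  coherent : ∀ α β, α ≤ β → β < omega1 → {x ∈ D α | f α x ≠ f β x}.Finite
  /-- (iii) every `A ⊆ ℕ` has a witness `δ_A < ω₁` -/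
  guess : ∀ A : Set ℕ, ∃ δ, δ < omega1 ∧ ∀ α, δ ≤ α → α < omega1 →
      EqStar (f α '' ((D α \ D δ) ∩ A)) ((D α \ D δ) ∩ A) ∧
      EqStar (f α '' ((D α \ D δ) \ A)) ((D α \ D δ) \ A)

/-- An automorphism of the Boolean algebra `P(ω)/Fin`, represented by a lifting
`Φ : Set ℕ → Set ℕ` acting on representatives: `Φ` is well defined, injective
and surjective modulo finite sets, and preserves the Boolean operations modulo
finite sets. -/
structure PωFinAuto where
  /-- the action on representatives -/
  Φ : Set ℕ → Set ℕ
  /-- well-definedness on `=*`-classes -/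
  congr : ∀ A B : Set ℕ, EqStar A B → EqStar (Φ A) (Φ B)
  /-- injectivity on `=*`-classes -/
  inj : ∀ A B : Set ℕ, EqStar (Φ A) (Φ B) → EqStar A B
  /-- surjectivity on `=*`-classes -/
  surj : ∀ B : Set ℕ, ∃ A : Set ℕ, EqStar (Φ A) B
  /-- preservation of unions -/
  map_union : ∀ A B : Set ℕ, EqStar (Φ (A ∪ B)) (Φ A ∪ Φ B)
  /-- preservation of complements -/
  map_compl : ∀ A : Set ℕ, EqStar (Φ Aᶜ) (Φ A)ᶜ

/-- A map on representatives induces a *trivial* automorphism of `P(ω)/Fin` if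
there is an almost permutation `h` of `ℕ` (an injection on a cofinite set `dom`
whose image is cofinite) with `Φ A =* h[A ∩ dom]` for all `A`. -/
def IsTrivial (Φ : Set ℕ → Set ℕ) : Prop :=
  ∃ (h : ℕ → ℕ) (dom : Set ℕ), (domᶜ : Set ℕ).Finite ∧
    ((h '' dom)ᶜ : Set ℕ).Finite ∧ Set.InjOn h dom ∧
    ∀ A : Set ℕ, EqStar (Φ A) (h '' (A ∩ dom))


-- ### Auxiliary development ###

lemma eqStar_iff {A B : Set ℕ} : EqStar A B ↔ (A \ B).Finite ∧ (B \ A).Finite := by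
  unfold EqStar; rw [Set.finite_union]

lemma eqStar_refl (A : Set ℕ) : EqStar A A := by
  simp [EqStar]

lemma eqStar_symm {A B : Set ℕ} (h : EqStar A B) : EqStar B A := by
  rw [eqStar_iff] at h ⊢; exact ⟨h.2, h.1⟩

lemma eqStar_trans {A B C : Set ℕ} (h1 : EqStar A B) (h2 : EqStar B C) : EqStar A C := by
  rw [eqStar_iff] at *
  constructor
  · exact (h1.1.union h2.1).subset (fun x hx => by
      by_cases hB : x ∈ B
      · exact Or.inr ⟨hB, hx.2⟩
      · exact Or.inl ⟨hx.1, hB⟩)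
  · exact (h2.2.union h1.2).subset (fun x hx => by
      by_cases hB : x ∈ B
      · exact Or.inr ⟨hB, hx.2⟩
      · exact Or.inl ⟨hx.1, hB⟩)

lemma eqStar_of_eq {A B : Set ℕ} (h : A = B) : EqStar A B := h ▸ eqStar_refl A

lemma EqStar.union {A A' B B' : Set ℕ} (h1 : EqStar A A') (h2 : EqStar B B') :
    EqStar (A ∪ B) (A' ∪ B') := by
  rw [eqStar_iff] at *
  constructor
  · exact (h1.1.union h2.1).subset (fun x hx => by
      rcases hx.1 with h | h
      · exact Or.inl ⟨h, fun hA' => hx.2 (Or.inl hA')⟩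
      · exact Or.inr ⟨h, fun hB' => hx.2 (Or.inr hB')⟩)
  · exact (h1.2.union h2.2).subset (fun x hx => by
      rcases hx.1 with h | h
      · exact Or.inl ⟨h, fun hA' => hx.2 (Or.inl hA')⟩
      · exact Or.inr ⟨h, fun hB' => hx.2 (Or.inr hB')⟩)

lemma EqStar.inter {A A' B B' : Set ℕ} (h1 : EqStar A A') (h2 : EqStar B B') :
    EqStar (A ∩ B) (A' ∩ B') := by
  rw [eqStar_iff] at *
  constructor
  · exact (h1.1.union h2.1).subset (fun x hx => by
      by_cases hA' : x ∈ A'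
      · exact Or.inr ⟨hx.1.2, fun hB' => hx.2 ⟨hA', hB'⟩⟩
      · exact Or.inl ⟨hx.1.1, hA'⟩)
  · exact (h1.2.union h2.2).subset (fun x hx => by
      by_cases hA : x ∈ A
      · exact Or.inr ⟨hx.1.2, fun hB => hx.2 ⟨hA, hB⟩⟩
      · exact Or.inl ⟨hx.1.1, hA⟩)

lemma EqStar.compl {A B : Set ℕ} (h : EqStar A B) : EqStar Aᶜ Bᶜ := by
  rw [eqStar_iff] at *
  refine ⟨h.2.subset ?_, h.1.subset ?_⟩ <;> intro x hx <;>
    exact ⟨not_not.mp hx.2, hx.1⟩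

lemma EqStar.image {A B : Set ℕ} (f : ℕ → ℕ) (h : EqStar A B) :
    EqStar (f '' A) (f '' B) := by
  rw [eqStar_iff] at *
  constructor
  · refine (h.1.image f).subset ?_
    rintro y ⟨⟨x, hx, rfl⟩, hy⟩
    exact ⟨x, ⟨hx, fun hB => hy ⟨x, hB, rfl⟩⟩, rfl⟩
  · refine (h.2.image f).subset ?_
    rintro y ⟨⟨x, hx, rfl⟩, hy⟩
    exact ⟨x, ⟨hx, fun hA => hy ⟨x, hA, rfl⟩⟩, rfl⟩

lemma eqStar_union_finite {A F : Set ℕ} (hF : F.Finite) : EqStar (A ∪ F) A := by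
  rw [eqStar_iff]
  refine ⟨hF.subset (fun x hx => hx.1.resolve_left (fun h => hx.2 h)), ?_⟩
  rw [Set.diff_eq_empty.mpr Set.subset_union_left]
  exact Set.finite_empty

lemma eqStar_diff_finite {A F : Set ℕ} (hF : F.Finite) : EqStar (A \ F) A := by
  rw [eqStar_iff]
  refine ⟨Set.Finite.subset (Set.finite_empty) ?_, hF.subset ?_⟩
  · rw [Set.diff_eq_empty.mpr Set.diff_subset]
  · intro x hx; exact not_not.mp (fun h => hx.2 ⟨hx.1, h⟩)

lemma finite_of_eqStar_disjoint {X Y : Set ℕ} (h : EqStar X Y) (hd : X ∩ Y = ∅) :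
    X.Finite := by
  rw [eqStar_iff] at h
  refine h.1.subset (fun x hx => ⟨hx, fun hY => ?_⟩)
  have : x ∈ X ∩ Y := ⟨hx, hY⟩
  rw [hd] at this
  exact this

lemma image_eqOn {A : Set ℕ} {f g : ℕ → ℕ} (h : ∀ x ∈ A, f x = g x) : f '' A = g '' A :=
  Set.image_congr h

lemma eqStar_image_of_eqOn_away {A E : Set ℕ} (hE : E.Finite) {f g : ℕ → ℕ}
    (h : ∀ x ∈ A \ E, f x = g x) : EqStar (f '' A) (g '' A) := by
  have h1 : EqStar (f '' (A \ E)) (f '' A) := EqStar.image f (eqStar_diff_finite hE)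
  have h2 : EqStar (g '' (A \ E)) (g '' A) := EqStar.image g (eqStar_diff_finite hE)
  have h3 : f '' (A \ E) = g '' (A \ E) := Set.image_congr h
  exact eqStar_trans (eqStar_symm h1) (h3 ▸ h2)

lemma eqStar_of_injOn_image {D A B : Set ℕ} {f : ℕ → ℕ} (hf : Set.InjOn f D)
    (hA : A ⊆ D) (hB : B ⊆ D) (h : EqStar (f '' A) (f '' B)) : EqStar A B := by
  rw [eqStar_iff] at *
  constructor
  · refine Set.Finite.of_finite_image (h.1.subset ?_) (hf.mono (fun x hx => hA hx.1))
    rintro y ⟨x, hx, rfl⟩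
    refine ⟨⟨x, hx.1, rfl⟩, fun ⟨x', hx', hxx⟩ => hx.2 ?_⟩
    rwa [hf (hB hx') (hA hx.1) hxx] at hx'
  · refine Set.Finite.of_finite_image (h.2.subset ?_) (hf.mono (fun x hx => hB hx.1))
    rintro y ⟨x, hx, rfl⟩
    refine ⟨⟨x, hx.1, rfl⟩, fun ⟨x', hx', hxx⟩ => hx.2 ?_⟩
    rwa [hf (hA hx') (hB hx.1) hxx] at hx'


open Classical in
/-- greedy sequence avoiding relation `R` within `S` -/
noncomputable def greedySeq (S : Set ℕ) (R : ℕ → ℕ → Prop) : ℕ → ℕ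
  | n => sInf (S \ ⋃ m ∈ Finset.range n,
      ({x | R x (greedySeq S R m)} ∪ {x | R (greedySeq S R m) x} ∪ Set.Iic (greedySeq S R m)))
  decreasing_by all_goals exact Finset.mem_range.mp (by assumption)

lemma greedySeq_mem (S : Set ℕ) (R : ℕ → ℕ → Prop) (hS : S.Infinite)
    (h1 : ∀ y, {x ∈ S | R x y}.Finite) (h2 : ∀ y, {x ∈ S | R y x}.Finite) (n : ℕ) :
    greedySeq S R n ∈ S \ ⋃ m ∈ Finset.range n,
      ({x | R x (greedySeq S R m)} ∪ {x | R (greedySeq S R m) x} ∪ Set.Iic (greedySeq S R m)) := by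
  rw [greedySeq]
  set U := ⋃ m ∈ Finset.range n,
      ({x | R x (greedySeq S R m)} ∪ {x | R (greedySeq S R m) x} ∪ Set.Iic (greedySeq S R m)) with hU
  have hfin : (S ∩ U).Finite := by
    rw [hU, Set.inter_iUnion₂]
    apply Set.Finite.biUnion (Finset.finite_toSet _)
    intro m _
    have hsub : S ∩ ({x | R x (greedySeq S R m)} ∪ {x | R (greedySeq S R m) x}
        ∪ Set.Iic (greedySeq S R m)) ⊆
        {x ∈ S | R x (greedySeq S R m)} ∪ {x ∈ S | R (greedySeq S R m) x}
        ∪ Set.Iic (greedySeq S R m) := by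
      rintro x ⟨hxS, hx⟩
      rcases hx with (h | h) | h
      · exact Or.inl (Or.inl ⟨hxS, h⟩)
      · exact Or.inl (Or.inr ⟨hxS, h⟩)
      · exact Or.inr h
    exact Set.Finite.subset (((h1 _).union (h2 _)).union (Set.finite_Iic _)) hsub
  have : (S \ U).Infinite := by
    have : S \ U = S \ (S ∩ U) := by
      ext x; simp only [Set.mem_diff, Set.mem_inter_iff]; tauto
    rw [this]
    exact hS.diff hfin
  exact Nat.sInf_mem this.nonempty

lemma exists_infinite_indep (S : Set ℕ) (R : ℕ → ℕ → Prop) (hS : S.Infinite)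
    (h1 : ∀ y, {x ∈ S | R x y}.Finite) (h2 : ∀ y, {x ∈ S | R y x}.Finite)
    (h3 : ∀ x ∈ S, ¬ R x x) :
    ∃ A : Set ℕ, A ⊆ S ∧ A.Infinite ∧ ∀ x ∈ A, ∀ y ∈ A, ¬ R x y := by
  set g := greedySeq S R with hg
  have hmem := greedySeq_mem S R hS h1 h2
  have hnotin : ∀ n m, m < n → g n ∉
      ({x | R x (g m)} ∪ {x | R (g m) x} ∪ Set.Iic (g m)) := by
    intro n m hmn
    have := (hmem n).2
    intro hcon
    exact this (Set.mem_biUnion (Finset.mem_range.mpr hmn) hcon)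
  have hmono : ∀ m n, m < n → g m < g n := by
    intro m n hmn
    have := hnotin n m hmn
    simp only [Set.mem_union, Set.mem_Iic, not_or, not_le] at this
    exact this.2
  have hinj : Function.Injective g := by
    intro a b hab
    rcases lt_trichotomy a b with h | h | h
    · exact absurd hab (ne_of_lt (hmono a b h))
    · exact h
    · exact absurd hab.symm (ne_of_lt (hmono b a h))
  refine ⟨Set.range g, ?_, Set.infinite_range_of_injective hinj, ?_⟩
  · rintro x ⟨n, rfl⟩; exact (hmem n).1
  · rintro x ⟨i, rfl⟩ y ⟨j, rfl⟩
    rcases lt_trichotomy i j with h | h | h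
    · have := hnotin j i h
      simp only [Set.mem_union, not_or] at this
      exact fun hc => this.1.2 hc
    · subst h; exact h3 _ (hmem i).1
    · have := hnotin i j h
      simp only [Set.mem_union, not_or] at this
      exact fun hc => this.1.1 hc

/-- adjacency for the coloring -/
def adjRel (h : ℕ → ℕ) (W : Set ℕ) (m n : ℕ) : Prop :=
  (m ∈ W ∧ h m = n) ∨ (n ∈ W ∧ h n = m)

open Classical in
noncomputable def col (h : ℕ → ℕ) (W : Set ℕ) : ℕ → Fin 3
  | n =>
    if hc : (((((Finset.range n).filter (fun m => adjRel h W m n)).attach.image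
        (fun m => col h W m.1))ᶜ : Finset (Fin 3))).Nonempty
    then hc.choose else 0
  decreasing_by
    all_goals
      have := m.2
      simp only [Finset.mem_filter, Finset.mem_range] at this
      exact this.1

lemma col_valid (h : ℕ → ℕ) (W : Set ℕ) (hinj : Set.InjOn h W) :
    ∀ n m, m < n → adjRel h W m n → col h W m ≠ col h W n := by
  classical
  intro n m hmn hadj
  set forb := ((((Finset.range n).filter (fun m => adjRel h W m n)).attach.image
        (fun m => col h W m.1)) : Finset (Fin 3)) with hforb
  have hcard : forb.card ≤ 2 := by
    calc forb.card ≤ ((Finset.range n).filter (fun m => adjRel h W m n)).attach.card :=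
          Finset.card_image_le
      _ = ((Finset.range n).filter (fun m => adjRel h W m n)).card := Finset.card_attach
      _ ≤ 2 := by
          have : ∀ a ∈ (Finset.range n).filter (fun m => adjRel h W m n),
              (if a = h n then (0 : Fin 2) else 1) ∈ (Finset.univ : Finset (Fin 2)) :=
            fun _ _ => Finset.mem_univ _
          have hinj2 : Set.InjOn (fun a => if a = h n then (0 : Fin 2) else 1)
              ((Finset.range n).filter (fun m => adjRel h W m n)) := by
            intro a ha b hb hab
            simp only [Finset.coe_filter, Set.mem_setOf_eq, Finset.mem_range] at ha hb
            by_cases h1 : a = h n <;> by_cases h2 : b = h n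
            · rw [h1, h2]
            · simp [h1, h2] at hab
            · simp [h1, h2] at hab
            · rcases ha.2 with ⟨hw, he⟩ | ⟨hw, he⟩
              · rcases hb.2 with ⟨hw', he'⟩ | ⟨hw', he'⟩
                · exact hinj hw hw' (he.trans he'.symm)
                · exact absurd he'.symm h2
              · exact absurd he.symm h1
          calc ((Finset.range n).filter (fun m => adjRel h W m n)).card
              ≤ (Finset.univ : Finset (Fin 2)).card :=
                Finset.card_le_card_of_injOn _ this hinj2
            _ = 2 := by simp
  have hne : ((forbᶜ : Finset (Fin 3))).Nonempty := by
    rw [← Finset.card_pos, Finset.card_compl]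
    have : Fintype.card (Fin 3) = 3 := by simp
    omega
  have hcoln : col h W n ∉ forb := by
    rw [col]
    rw [dif_pos hne]
    have := hne.choose_spec
    rwa [Finset.mem_compl] at this
  intro hcon
  apply hcoln
  rw [hforb]
  apply Finset.mem_image.mpr
  have hm : m ∈ (Finset.range n).filter (fun m => adjRel h W m n) := by
    simp [Finset.mem_filter, Finset.mem_range, hmn, hadj]
  exact ⟨⟨m, hm⟩, Finset.mem_attach _ _, hcon⟩


variable (T : BowtieFn)

noncomputable def BTdelta (A : Set ℕ) : Ordinal := (T.guess A).choose

lemma BTdelta_lt (A : Set ℕ) : BTdelta T A < omega1 := (T.guess A).choose_spec.1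

lemma BTdelta_spec (A : Set ℕ) (α : Ordinal) (h1 : BTdelta T A ≤ α) (h2 : α < omega1) :
    EqStar (T.f α '' ((T.D α \ T.D (BTdelta T A)) ∩ A)) ((T.D α \ T.D (BTdelta T A)) ∩ A) :=
  ((T.guess A).choose_spec.2 α h1 h2).1

noncomputable def lvl (γ : Ordinal) (A : Set ℕ) : Set ℕ :=
  T.f γ '' (A ∩ T.D γ) ∪ (A \ T.D γ)

noncomputable def BTPhi (A : Set ℕ) : Set ℕ := lvl T (BTdelta T A) A

lemma eqStar_of_subset_of_diff_finite {A B : Set ℕ} (h1 : A ⊆ B) (h2 : (B \ A).Finite) :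
    EqStar A B := by
  rw [eqStar_iff]
  exact ⟨Set.Finite.subset Set.finite_empty (by rw [Set.diff_eq_empty.mpr h1]), h2⟩

lemma subStar_le {α β : Ordinal} (h1 : α ≤ β) (h2 : β < omega1) :
    (T.D α \ T.D β).Finite := by
  rcases eq_or_lt_of_le h1 with rfl | h
  · simp
  · exact T.sub α β h h2

/-- splitting an intersection along two levels -/
lemma inter_split {α γ : Ordinal} (h1 : α ≤ γ) (h2 : γ < omega1) (A : Set ℕ) :
    EqStar (A ∩ T.D γ) ((A ∩ T.D α) ∪ (A ∩ (T.D γ \ T.D α))) := by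
  apply eqStar_symm
  apply eqStar_symm (eqStar_of_subset_of_diff_finite ?_ ?_)
  · rintro x ⟨hxA, hxD⟩
    by_cases hα : x ∈ T.D α
    · exact Or.inl ⟨hxA, hα⟩
    · exact Or.inr ⟨hxA, hxD, hα⟩
  · refine (subStar_le T h1 h2).subset ?_
    rintro x ⟨hx, hxn⟩
    rcases hx with ⟨hxA, hxα⟩ | ⟨hxA, hxγ, _⟩
    · exact ⟨hxα, fun hγ => hxn ⟨hxA, hγ⟩⟩
    · exact absurd ⟨hxA, hxγ⟩ hxn

lemma image_coherent {α γ : Ordinal} (h1 : α ≤ γ) (h2 : γ < omega1) {X : Set ℕ}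
    (hX : X ⊆ T.D α) : EqStar (T.f γ '' X) (T.f α '' X) := by
  apply eqStar_image_of_eqOn_away (T.coherent α γ h1 h2)
  rintro x ⟨hx, hxE⟩
  by_contra hne
  exact hxE ⟨hX hx, fun he => hne he.symm⟩

lemma phi_lvl (A : Set ℕ) (γ : Ordinal) (h1 : BTdelta T A ≤ γ) (h2 : γ < omega1) :
    EqStar (BTPhi T A) (lvl T γ A) := by
  rcases eq_or_lt_of_le h1 with heq | hlt
  · unfold BTPhi; rw [heq]; exact eqStar_refl _
  unfold BTPhi lvl
  set δ := BTdelta T A with hδ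
  have hδω : δ < omega1 := BTdelta_lt T A
  apply eqStar_symm
  have step1 : EqStar (T.f γ '' (A ∩ T.D γ))
      (T.f γ '' (A ∩ T.D δ) ∪ T.f γ '' (A ∩ (T.D γ \ T.D δ))) := by
    rw [← Set.image_union]
    exact EqStar.image _ (inter_split T hlt.le h2 A)
  have step2 : EqStar (T.f γ '' (A ∩ T.D δ)) (T.f δ '' (A ∩ T.D δ)) :=
    image_coherent T hlt.le h2 Set.inter_subset_right
  have step3 : EqStar (T.f γ '' (A ∩ (T.D γ \ T.D δ))) (A ∩ (T.D γ \ T.D δ)) := by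
    have h := BTdelta_spec T A γ h1 h2
    rw [← hδ] at h
    rw [Set.inter_comm A (T.D γ \ T.D δ)]
    exact h
  have step4 : EqStar ((A ∩ (T.D γ \ T.D δ)) ∪ (A \ T.D γ)) (A \ T.D δ) := by
    apply eqStar_symm
    rw [eqStar_iff]
    constructor
    · refine (subStar_le T hlt.le h2).subset ?_
      rintro x ⟨⟨hxA, hxδ⟩, hxn⟩
      by_cases hγ : x ∈ T.D γ
      · exact absurd (Or.inl ⟨hxA, hγ, hxδ⟩) hxn
      · exact absurd (Or.inr ⟨hxA, hγ⟩) hxn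
    · refine (subStar_le T hlt.le h2).subset ?_
      rintro x ⟨hx, hxn⟩
      rcases hx with ⟨hxA, _, hxδ⟩ | ⟨hxA, hxγ⟩
      · exact absurd ⟨hxA, hxδ⟩ hxn
      · rcases Classical.em (x ∈ T.D δ) with hδ' | hδ'
        · exact ⟨hδ', hxγ⟩
        · exact absurd ⟨hxA, hδ'⟩ hxn
  have e1 : EqStar (T.f γ '' (A ∩ T.D γ) ∪ (A \ T.D γ))
      ((T.f γ '' (A ∩ T.D δ) ∪ T.f γ '' (A ∩ (T.D γ \ T.D δ))) ∪ (A \ T.D γ)) :=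
    EqStar.union step1 (eqStar_refl _)
  have e2 : EqStar ((T.f γ '' (A ∩ T.D δ) ∪ T.f γ '' (A ∩ (T.D γ \ T.D δ))) ∪ (A \ T.D γ))
      ((T.f δ '' (A ∩ T.D δ) ∪ (A ∩ (T.D γ \ T.D δ))) ∪ (A \ T.D γ)) :=
    EqStar.union (EqStar.union step2 step3) (eqStar_refl _)
  have e3 : (T.f δ '' (A ∩ T.D δ) ∪ (A ∩ (T.D γ \ T.D δ))) ∪ (A \ T.D γ)
      = T.f δ '' (A ∩ T.D δ) ∪ ((A ∩ (T.D γ \ T.D δ)) ∪ (A \ T.D γ)) :=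
    Set.union_assoc _ _ _
  have e4 : EqStar (T.f δ '' (A ∩ T.D δ) ∪ ((A ∩ (T.D γ \ T.D δ)) ∪ (A \ T.D γ)))
      (T.f δ '' (A ∩ T.D δ) ∪ (A \ T.D δ)) :=
    EqStar.union (eqStar_refl _) step4
  exact eqStar_trans e1 (eqStar_trans e2 (e3 ▸ e4))

lemma lvl_congr (γ : Ordinal) {A B : Set ℕ} (h : EqStar A B) :
    EqStar (lvl T γ A) (lvl T γ B) := by
  unfold lvl
  refine EqStar.union (EqStar.image _ (h.inter (eqStar_refl _))) ?_
  rw [Set.diff_eq, Set.diff_eq]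
  exact h.inter (eqStar_refl _)

lemma BTPhi_congr {A B : Set ℕ} (h : EqStar A B) : EqStar (BTPhi T A) (BTPhi T B) := by
  set γ := max (BTdelta T A) (BTdelta T B) with hγ
  have hγω : γ < omega1 := max_lt (BTdelta_lt T A) (BTdelta_lt T B)
  exact eqStar_trans (phi_lvl T A γ (le_max_left _ _) hγω)
    (eqStar_trans (lvl_congr T γ h)
      (eqStar_symm (phi_lvl T B γ (le_max_right _ _) hγω)))

lemma lvl_inter_D {γ : Ordinal} (hγ : γ < omega1) (A : Set ℕ) :
    lvl T γ A ∩ T.D γ = T.f γ '' (A ∩ T.D γ) := by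
  have him : T.f γ '' (A ∩ T.D γ) ⊆ T.D γ := by
    rintro y ⟨x, hx, rfl⟩
    exact (T.bijOn γ hγ).mapsTo hx.2
  ext x
  constructor
  · rintro ⟨hx | hx, hD⟩
    · exact hx
    · exact absurd hD hx.2
  · intro hx
    exact ⟨Or.inl hx, him hx⟩

lemma lvl_diff_D {γ : Ordinal} (hγ : γ < omega1) (A : Set ℕ) :
    lvl T γ A \ T.D γ = A \ T.D γ := by
  have him : T.f γ '' (A ∩ T.D γ) ⊆ T.D γ := by
    rintro y ⟨x, hx, rfl⟩
    exact (T.bijOn γ hγ).mapsTo hx.2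
  ext x
  constructor
  · rintro ⟨hx | hx, hD⟩
    · exact absurd (him hx) hD
    · exact hx
  · intro hx
    exact ⟨Or.inr hx, hx.2⟩

lemma BTPhi_inj {A B : Set ℕ} (h : EqStar (BTPhi T A) (BTPhi T B)) : EqStar A B := by
  set γ := max (BTdelta T A) (BTdelta T B) with hγ
  have hγω : γ < omega1 := max_lt (BTdelta_lt T A) (BTdelta_lt T B)
  have hl : EqStar (lvl T γ A) (lvl T γ B) :=
    eqStar_trans (eqStar_symm (phi_lvl T A γ (le_max_left _ _) hγω))
      (eqStar_trans h (phi_lvl T B γ (le_max_right _ _) hγω))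
  have h1 : EqStar (A \ T.D γ) (B \ T.D γ) := by
    have := hl.inter (eqStar_refl ((T.D γ)ᶜ))
    rwa [← Set.diff_eq, ← Set.diff_eq, lvl_diff_D T hγω, lvl_diff_D T hγω] at this
  have h2 : EqStar (T.f γ '' (A ∩ T.D γ)) (T.f γ '' (B ∩ T.D γ)) := by
    have := hl.inter (eqStar_refl (T.D γ))
    rwa [lvl_inter_D T hγω, lvl_inter_D T hγω] at this
  have h3 : EqStar (A ∩ T.D γ) (B ∩ T.D γ) :=
    eqStar_of_injOn_image (T.bijOn γ hγω).injOn Set.inter_subset_right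
      Set.inter_subset_right h2
  have := h3.union h1
  rwa [Set.inter_union_diff, Set.inter_union_diff] at this

lemma lvl_union (γ : Ordinal) (A B : Set ℕ) :
    lvl T γ (A ∪ B) = lvl T γ A ∪ lvl T γ B := by
  unfold lvl
  rw [Set.union_inter_distrib_right, Set.image_union, Set.union_diff_distrib]
  exact Set.union_union_union_comm _ _ _ _

lemma BTPhi_union (A B : Set ℕ) :
    EqStar (BTPhi T (A ∪ B)) (BTPhi T A ∪ BTPhi T B) := by
  set γ := max (max (BTdelta T (A ∪ B)) (BTdelta T A)) (BTdelta T B) with hγ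
  have hγω : γ < omega1 :=
    max_lt (max_lt (BTdelta_lt T _) (BTdelta_lt T _)) (BTdelta_lt T _)
  refine eqStar_trans (phi_lvl T (A ∪ B) γ ((le_max_left _ _).trans (le_max_left _ _)) hγω) ?_
  rw [lvl_union]
  exact EqStar.union
    (eqStar_symm (phi_lvl T A γ ((le_max_right _ _).trans (le_max_left _ _)) hγω))
    (eqStar_symm (phi_lvl T B γ (le_max_right _ _) hγω))

lemma lvl_compl {γ : Ordinal} (hγ : γ < omega1) (A : Set ℕ) :
    lvl T γ Aᶜ = (lvl T γ A)ᶜ := by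
  have himg : T.f γ '' (Aᶜ ∩ T.D γ) = T.D γ \ T.f γ '' (A ∩ T.D γ) := by
    ext y
    constructor
    · rintro ⟨x, hx, rfl⟩
      refine ⟨(T.bijOn γ hγ).mapsTo hx.2, ?_⟩
      rintro ⟨x', hx', he⟩
      rw [(T.bijOn γ hγ).injOn hx'.2 hx.2 he] at hx'
      exact hx.1 hx'.1
    · rintro ⟨hy, hyn⟩
      obtain ⟨x, hx, rfl⟩ := (T.bijOn γ hγ).surjOn hy
      refine ⟨x, ⟨fun hA => hyn ⟨x, ⟨hA, hx⟩, rfl⟩, hx⟩, rfl⟩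
  have hS : T.f γ '' (A ∩ T.D γ) ⊆ T.D γ := by
    rintro y ⟨x, hx, rfl⟩
    exact (T.bijOn γ hγ).mapsTo hx.2
  unfold lvl
  rw [himg]
  ext x
  have hx := @hS x
  simp only [Set.mem_union, Set.mem_diff, Set.mem_compl_iff, Set.mem_union] at *
  tauto

lemma BTPhi_compl (A : Set ℕ) : EqStar (BTPhi T Aᶜ) (BTPhi T A)ᶜ := by
  set γ := max (BTdelta T A) (BTdelta T Aᶜ) with hγ
  have hγω : γ < omega1 := max_lt (BTdelta_lt T A) (BTdelta_lt T Aᶜ)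
  refine eqStar_trans (phi_lvl T Aᶜ γ (le_max_right _ _) hγω) ?_
  rw [lvl_compl T hγω]
  exact EqStar.compl (eqStar_symm (phi_lvl T A γ (le_max_left _ _) hγω))

lemma BTPhi_surj (B : Set ℕ) : ∃ A : Set ℕ, EqStar (BTPhi T A) B := by
  set α := BTdelta T B with hα
  have hαω : α < omega1 := BTdelta_lt T B
  set A := (T.D α ∩ T.f α ⁻¹' B) ∪ (B \ T.D α) with hA
  refine ⟨A, ?_⟩
  set γ := max α (BTdelta T A) with hγ
  have hγω : γ < omega1 := max_lt hαω (BTdelta_lt T A)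
  have hαγ : α ≤ γ := le_max_left _ _
  refine eqStar_trans (phi_lvl T A γ (le_max_right _ _) hγω) ?_
  have p1 : EqStar (A ∩ T.D γ) ((T.D α ∩ T.f α ⁻¹' B) ∪ (B ∩ (T.D γ \ T.D α))) := by
    rw [hA, Set.union_inter_distrib_right]
    have e1 : (B \ T.D α) ∩ T.D γ = B ∩ (T.D γ \ T.D α) := by
      ext x; constructor
      · rintro ⟨⟨h1, h2⟩, h3⟩; exact ⟨h1, h3, h2⟩
      · rintro ⟨h1, h2, h3⟩; exact ⟨⟨h1, h3⟩, h2⟩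
    rw [e1]
    refine EqStar.union ?_ (eqStar_refl _)
    apply eqStar_of_subset_of_diff_finite Set.inter_subset_left
    refine (subStar_le T hαγ hγω).subset ?_
    rintro x ⟨hx, hxn⟩
    exact ⟨hx.1, fun hγ' => hxn ⟨hx, hγ'⟩⟩
  have p2 : EqStar (T.f γ '' (A ∩ T.D γ))
      (T.f γ '' (T.D α ∩ T.f α ⁻¹' B) ∪ T.f γ '' (B ∩ (T.D γ \ T.D α))) := by
    rw [← Set.image_union]
    exact EqStar.image _ p1
  have p3 : EqStar (T.f γ '' (T.D α ∩ T.f α ⁻¹' B)) (B ∩ T.D α) := by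
    refine eqStar_trans (image_coherent T hαγ hγω Set.inter_subset_left) ?_
    apply eqStar_of_eq
    rw [Set.image_inter_preimage, (T.bijOn α hαω).image_eq, Set.inter_comm]
  have p4 : EqStar (T.f γ '' (B ∩ (T.D γ \ T.D α))) (B ∩ (T.D γ \ T.D α)) := by
    have h := BTdelta_spec T B γ (hα ▸ hαγ) hγω
    rw [← hα] at h
    rw [Set.inter_comm B (T.D γ \ T.D α)]
    exact h
  have p5 : EqStar ((B ∩ T.D α) ∪ (B ∩ (T.D γ \ T.D α))) (B ∩ T.D γ) :=
    eqStar_symm (inter_split T hαγ hγω B)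
  have p6 : EqStar (A \ T.D γ) (B \ T.D γ) := by
    rw [hA, Set.union_diff_distrib]
    have e1 : ((T.D α ∩ T.f α ⁻¹' B) \ T.D γ).Finite := by
      refine (subStar_le T hαγ hγω).subset ?_
      rintro x ⟨hx, hxn⟩
      exact ⟨hx.1, hxn⟩
    have e2 : EqStar ((B \ T.D α) \ T.D γ) (B \ T.D γ) := by
      apply eqStar_of_subset_of_diff_finite
      · rintro x ⟨⟨h1, _⟩, h3⟩; exact ⟨h1, h3⟩
      · refine (subStar_le T hαγ hγω).subset ?_
        rintro x ⟨⟨h1, h2⟩, hxn⟩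
        rcases Classical.em (x ∈ T.D α) with hα' | hα'
        · exact ⟨hα', h2⟩
        · exact absurd ⟨⟨h1, hα'⟩, h2⟩ hxn
    rw [Set.union_comm]
    exact eqStar_trans (eqStar_union_finite e1) e2
  have final : EqStar (lvl T γ A) ((B ∩ T.D γ) ∪ (B \ T.D γ)) :=
    EqStar.union (eqStar_trans p2 (eqStar_trans (EqStar.union p3 p4) p5)) p6
  rwa [Set.inter_union_diff] at final

noncomputable def BTauto : PωFinAuto where
  Φ := BTPhi T
  congr := fun _ _ h => BTPhi_congr T h
  inj := fun _ _ h => BTPhi_inj T h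
  surj := fun B => BTPhi_surj T B
  map_union := fun A B => BTPhi_union T A B
  map_compl := fun A => BTPhi_compl T A


variable (T : BowtieFn)

lemma phi_of_subset {α : Ordinal} (hα : α < omega1) {A : Set ℕ} (hA : A ⊆ T.D α) :
    EqStar (BTPhi T A) (T.f α '' A) := by
  set γ := max α (BTdelta T A) with hγ
  have hγω : γ < omega1 := max_lt hα (BTdelta_lt T A)
  have hαγ : α ≤ γ := le_max_left _ _
  refine eqStar_trans (phi_lvl T A γ (le_max_right _ _) hγω) ?_
  have hfin : (A \ T.D γ).Finite :=
    (subStar_le T hαγ hγω).subset (fun x hx => ⟨hA hx.1, hx.2⟩)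
  refine eqStar_trans (eqStar_union_finite hfin) ?_
  have h1 : EqStar (A ∩ T.D γ) A := by
    apply eqStar_of_subset_of_diff_finite Set.inter_subset_left
    exact hfin.subset (fun x hx => ⟨hx.1, fun h => hx.2 ⟨hx.1, h⟩⟩)
  exact eqStar_trans (EqStar.image _ h1) (image_coherent T hαγ hγω hA)

theorem BTauto_nontrivial : ¬ IsTrivial (BTauto T).Φ := by
  rintro ⟨h, dom, hdomc, -, hinj, htriv⟩
  have htriv' : ∀ A : Set ℕ, EqStar (BTPhi T A) (h '' (A ∩ dom)) := htriv
  -- Step 1: h agrees with f α on D α mod finite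
  have agree : ∀ α, α < omega1 → {x | x ∈ T.D α ∧ x ∈ dom ∧ T.f α x ≠ h x}.Finite := by
    intro α hα
    by_contra hfin
    have hS : {x | x ∈ T.D α ∧ x ∈ dom ∧ T.f α x ≠ h x}.Infinite := hfin
    set S := {x | x ∈ T.D α ∧ x ∈ dom ∧ T.f α x ≠ h x} with hSdef
    have hSD : S ⊆ T.D α := fun x hx => hx.1
    have hSdom : S ⊆ dom := fun x hx => hx.2.1
    obtain ⟨A, hAS, hAinf, hAindep⟩ := exists_infinite_indep S (fun x y => T.f α x = h y) hS
      (fun y => by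
        refine Set.Finite.of_finite_image (Set.Finite.subset (Set.finite_singleton (h y)) ?_)
          ((T.bijOn α hα).injOn.mono (fun x hx => hSD hx.1))
        rintro z ⟨x, hx, rfl⟩
        exact hx.2)
      (fun y => by
        refine Set.Finite.of_finite_image (Set.Finite.subset (Set.finite_singleton (T.f α y)) ?_)
          (hinj.mono (fun x hx => hSdom hx.1))
        rintro z ⟨x, hx, rfl⟩
        exact hx.2.symm)
      (fun x hx => hx.2.2)
    have e1 : EqStar (BTPhi T A) (T.f α '' A) :=
      phi_of_subset T hα (hAS.trans hSD)
    have e2 : EqStar (BTPhi T A) (h '' A) := by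
      have := htriv' A
      rwa [Set.inter_eq_self_of_subset_left (hAS.trans hSdom)] at this
    have e3 : EqStar (T.f α '' A) (h '' A) := eqStar_trans (eqStar_symm e1) e2
    have hdisj : (T.f α '' A) ∩ (h '' A) = ∅ := by
      ext y
      simp only [Set.mem_inter_iff, Set.mem_image, Set.mem_empty_iff_false, iff_false]
      rintro ⟨⟨x, hx, rfl⟩, ⟨x', hx', he⟩⟩
      exact hAindep x hx x' hx' he.symm
    have hfin2 : (T.f α '' A).Finite := finite_of_eqStar_disjoint e3 hdisj
    exact hAinf (Set.Finite.of_finite_image hfin2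
      ((T.bijOn α hα).injOn.mono (hAS.trans hSD)))
  -- the set of moved points
  set W := {x | x ∈ dom ∧ h x ≠ x} with hW
  set A : Fin 3 → Set ℕ := fun i => {x ∈ W | col h W x = i} with hA
  have hAW : ∀ i, A i ⊆ W := fun i x hx => hx.1
  have hAdom : ∀ i, A i ⊆ dom := fun i x hx => hx.1.1
  have hmoves : ∀ i, ∀ x ∈ A i, h x ∉ A i := by
    intro i x hx hcon
    have hxW : x ∈ W := hx.1
    have hne : h x ≠ x := hxW.2
    rcases lt_trichotomy x (h x) with hlt | heq | hgt
    · exact col_valid h W (hinj.mono (fun x hx => hx.1)) (h x) x hlt (Or.inl ⟨hxW, rfl⟩) (hx.2.trans hcon.2.symm)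
    · exact hne heq.symm
    · exact col_valid h W (hinj.mono (fun x hx => hx.1)) x (h x) hgt (Or.inr ⟨hxW, rfl⟩) (hcon.2.trans hx.2.symm)
  -- Step 2: each A i is almost contained in D (delta (A i)) beyond
  have key : ∀ i : Fin 3, ∀ α, BTdelta T (A i) ≤ α → α < omega1 →
      ((T.D α \ T.D (BTdelta T (A i))) ∩ A i).Finite := by
    intro i α hδα hα
    set P := (T.D α \ T.D (BTdelta T (A i))) ∩ A i with hP
    have hPD : P ⊆ T.D α := fun x hx => hx.1.1
    have hPA : P ⊆ A i := fun x hx => hx.2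
    set Sα := {x | x ∈ T.D α ∧ x ∈ dom ∧ T.f α x ≠ h x} with hSα
    have hSαfin : Sα.Finite := agree α hα
    set P' := P \ Sα with hP'
    have spec : EqStar (T.f α '' P) P := BTdelta_spec T (A i) α hδα hα
    have hPP' : EqStar P' P := eqStar_diff_finite hSαfin
    have himeq : T.f α '' P' = h '' P' := by
      apply Set.image_congr
      intro x hx
      by_contra hne
      exact hx.2 ⟨hPD hx.1, hAdom i (hPA hx.1), hne⟩
    have e1 : EqStar P (h '' P') := by
      refine eqStar_trans (eqStar_symm spec) ?_
      rw [← himeq]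
      exact EqStar.image _ (eqStar_symm hPP')
    have hdisj : P ∩ (h '' P') = ∅ := by
      ext y
      simp only [Set.mem_inter_iff, Set.mem_image, Set.mem_empty_iff_false, iff_false]
      rintro ⟨hyP, ⟨x, hx, rfl⟩⟩
      exact hmoves i x (hPA hx.1) (hPA hyP)
    exact finite_of_eqStar_disjoint e1 hdisj
  -- Step 3: contradiction
  set δs : Fin 3 → Ordinal := fun i => BTdelta T (A i) with hδs
  set δm := max (δs 0) (max (δs 1) (δs 2)) with hδm
  have hδmω : δm < omega1 :=
    max_lt (BTdelta_lt T _) (max_lt (BTdelta_lt T _) (BTdelta_lt T _))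
  have hle : ∀ i : Fin 3, δs i ≤ δm := by
    intro i
    have h3 : i = 0 ∨ i = 1 ∨ i = 2 := by fin_cases i <;> simp
    rcases h3 with rfl | rfl | rfl
    · exact le_max_left _ _
    · exact (le_max_left _ _).trans (le_max_right _ _)
    · exact (le_max_right _ _).trans (le_max_right _ _)
  set α := Order.succ δm with hα
  have hαω : α < omega1 :=
    (Cardinal.isSuccLimit_ord (Cardinal.aleph0_le_aleph 1)).succ_lt hδmω
  have hInf : (T.D α \ T.D δm).Infinite := T.diff_infinite δm α (Order.lt_succ δm) hαω
  set Sα := {x | x ∈ T.D α ∧ x ∈ dom ∧ T.f α x ≠ h x} with hSα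
  have hSαfin : Sα.Finite := agree α hαω
  set G := (T.D α \ T.D δm) \ (domᶜ ∪ Sα) with hG
  have hGinf : G.Infinite := hInf.diff (hdomc.union hSαfin)
  have hGW : G ⊆ W := by
    rintro x ⟨⟨hxα, _⟩, hxn⟩
    have hxdom : x ∈ dom := by
      by_contra hc
      exact hxn (Or.inl hc)
    refine ⟨hxdom, fun he => ?_⟩
    have hfne : T.f α x ≠ h x := by
      intro hfe
      exact T.fixedPointFree α hαω x hxα (hfe.trans he)
    exact hxn (Or.inr ⟨hxα, hxdom, hfne⟩)
  have hGfin : ∀ i : Fin 3, (G ∩ A i).Finite := by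
    intro i
    have hsub : G ∩ A i ⊆ ((T.D α \ T.D (δs i)) ∩ A i) ∪ (T.D (δs i) \ T.D δm) := by
      rintro x ⟨⟨⟨hxα, hxδm⟩, _⟩, hxA⟩
      by_cases hδi : x ∈ T.D (δs i)
      · exact Or.inr ⟨hδi, hxδm⟩
      · exact Or.inl ⟨⟨hxα, hδi⟩, hxA⟩
    refine Set.Finite.subset (Set.Finite.union ?_ ?_) hsub
    · exact key i α ((hle i).trans (Order.lt_succ δm).le) hαω
    · exact subStar_le T (hle i) hδmω
  have hGsub : G ⊆ (G ∩ A 0) ∪ ((G ∩ A 1) ∪ (G ∩ A 2)) := by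
    intro x hx
    have hxW : x ∈ W := hGW hx
    have h3 : col h W x = 0 ∨ col h W x = 1 ∨ col h W x = 2 := by
      rcases (by decide : ∀ j : Fin 3, j = 0 ∨ j = 1 ∨ j = 2) (col h W x) with
        hj | hj | hj
      · exact Or.inl hj
      · exact Or.inr (Or.inl hj)
      · exact Or.inr (Or.inr hj)
    rcases h3 with hj | hj | hj
    · exact Or.inl ⟨hx, hxW, hj⟩
    · exact Or.inr (Or.inl ⟨hx, hxW, hj⟩)
    · exact Or.inr (Or.inr ⟨hx, hxW, hj⟩)
  exact hGinf (Set.Finite.subset ((hGfin 0).union ((hGfin 1).union (hGfin 2))) hGsub)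


/-- If there exists a bowtie of functions, then there exists a
nontrivial automorphism of `P(ω)/Fin`. -/
theorem bowtie_implies_nontrivial_automorphism (h : Nonempty BowtieFn) :
    ∃ F : PωFinAuto, ¬ IsTrivial F.Φ := by
  obtain ⟨T⟩ := h
  exact ⟨BTauto T, BTauto_nontrivial T⟩
end

section
/- Let ⟨f_α : α < ω₁⟩ be a bowtie of functions with domains D_α, and let F be the associated map on subsets of ℕ. For a free (nonprincipal) ultrafilter u on ℕ, the following are equivalent: (a) for every A ∈ u, F(A) ∈ u; (b) D_α ∉ u for every α < ω₁. That is, the fixed points of the induced autohomeomorphism of the space of free ultrafilters are exactly the free ultrafilters avoiding all the sets D_α. -/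
open Set

/-- `δ` witnesses condition (iii) of the bowtie definition for the set `A`. -/
def BowtieFn.IsWitness (B : BowtieFn) (A : Set ℕ) (δ : Ordinal) : Prop :=
  δ < omega1 ∧ ∀ α, δ ≤ α → α < omega1 →
    EqStar (B.f α '' ((B.D α \ B.D δ) ∩ A)) ((B.D α \ B.D δ) ∩ A) ∧
    EqStar (B.f α '' ((B.D α \ B.D δ) \ A)) ((B.D α \ B.D δ) \ A)

/-- `δ_A` : the least ordinal witnessing condition (iii) for `A`. -/
noncomputable def BowtieFn.delta (B : BowtieFn) (A : Set ℕ) : Ordinal :=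
  sInf {δ | B.IsWitness A δ}

/-- The map `F` associated to a bowtie of functions:
`F(A) = f_{δ_A}[A ∩ D_{δ_A}] ∪ (A \ D_{δ_A})`. -/
noncomputable def BowtieFn.F (B : BowtieFn) (A : Set ℕ) : Set ℕ :=
  B.f (B.delta A) '' (A ∩ B.D (B.delta A)) ∪ (A \ B.D (B.delta A))

open Classical in
noncomputable def forbSet (D : Set ℕ) (f : ℕ → ℕ) (c : ℕ → Fin 3) (n : ℕ) : Finset (Fin 3) :=
  ((Finset.range n).filter (fun m => m ∈ D ∧ f m = n)).image c ∪
    (if n ∈ D ∧ f n < n then {c (f n)} else ∅)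

noncomputable def bowtieCol (D : Set ℕ) (f : ℕ → ℕ) : ℕ → Fin 3 :=
  (Nat.lt_wfRel.wf).fix (fun n ih =>
    let c : ℕ → Fin 3 := fun m => if h : m < n then ih m h else 0
    if hne : (Finset.univ \ forbSet D f c n).Nonempty then (Finset.univ \ forbSet D f c n).min' hne
    else 0)

lemma forbSet_congr (D : Set ℕ) (f : ℕ → ℕ) {c c' : ℕ → Fin 3} (n : ℕ)
    (h : ∀ m < n, c m = c' m) : forbSet D f c n = forbSet D f c' n := by
  classical
  unfold forbSet
  congr 1
  · apply Finset.image_congr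
    intro m hm
    simp only [Finset.coe_filter, Finset.mem_range, mem_setOf_eq] at hm
    exact h m hm.1
  · split_ifs with hc
    · rw [h _ hc.2]
    · rfl

lemma forbSet_card_le (D : Set ℕ) (f : ℕ → ℕ) (hinj : Set.InjOn f D) (c : ℕ → Fin 3) (n : ℕ) :
    (forbSet D f c n).card ≤ 2 := by
  classical
  unfold forbSet
  refine le_trans (Finset.card_union_le _ _) ?_
  have h1 : (((Finset.range n).filter (fun m => m ∈ D ∧ f m = n)).image c).card ≤ 1 := by
    refine le_trans (Finset.card_image_le) (Finset.card_le_one.mpr ?_)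
    intro a ha b hb
    simp only [Finset.mem_filter, Finset.mem_range] at ha hb
    exact hinj ha.2.1 hb.2.1 (ha.2.2.trans hb.2.2.symm)
  have h2 : (if n ∈ D ∧ f n < n then ({c (f n)} : Finset (Fin 3)) else ∅).card ≤ 1 := by
    split_ifs <;> simp
  omega

lemma forbSet_compl_nonempty (D : Set ℕ) (f : ℕ → ℕ) (hinj : Set.InjOn f D) (c : ℕ → Fin 3)
    (n : ℕ) : (Finset.univ \ forbSet D f c n).Nonempty := by
  rw [Finset.sdiff_nonempty]
  intro hsub
  have := Finset.card_le_card hsub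
  have h2 := forbSet_card_le D f hinj c n
  simp [Finset.card_univ] at this
  omega

lemma bowtieCol_not_mem (D : Set ℕ) (f : ℕ → ℕ) (hinj : Set.InjOn f D) (n : ℕ) :
    bowtieCol D f n ∉ forbSet D f (bowtieCol D f) n := by
  have heq : bowtieCol D f n =
      (let c : ℕ → Fin 3 := fun m => if h : m < n then bowtieCol D f m else 0
       if hne : (Finset.univ \ forbSet D f c n).Nonempty then (Finset.univ \ forbSet D f c n).min' hne
       else 0) := by
    rw [bowtieCol, WellFounded.fix_eq]
  rw [heq]
  simp only
  set c : ℕ → Fin 3 := fun m => if h : m < n then bowtieCol D f m else 0 with hc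
  have hcc : forbSet D f c n = forbSet D f (bowtieCol D f) n := by
    apply forbSet_congr
    intro m hm
    simp [hc, hm]
  rw [dif_pos (forbSet_compl_nonempty D f hinj c n), ← hcc]
  have := Finset.min'_mem _ (forbSet_compl_nonempty D f hinj c n)
  exact (Finset.mem_sdiff.mp this).2

lemma bowtieCol_ne (D : Set ℕ) (f : ℕ → ℕ) (hinj : Set.InjOn f D)
    (hfp : ∀ x ∈ D, f x ≠ x) : ∀ x ∈ D, bowtieCol D f (f x) ≠ bowtieCol D f x := by
  classical
  intro x hx
  rcases lt_trichotomy (f x) x with hlt | heq | hgt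
  · intro h
    apply bowtieCol_not_mem D f hinj x
    rw [← h]
    unfold forbSet
    apply Finset.mem_union_right
    rw [if_pos ⟨hx, hlt⟩]
    simp
  · exact absurd heq (hfp x hx)
  · intro h
    apply bowtieCol_not_mem D f hinj (f x)
    rw [h]
    unfold forbSet
    apply Finset.mem_union_left
    apply Finset.mem_image_of_mem
    simp [Finset.mem_range, hgt, hx]

/-- for a free ultrafilter `u` on `ℕ`, `u` is a fixed point of the
map induced by `F` (i.e. `F` maps sets in `u` to sets in `u`) iff `u` avoids
every `D_α`. -/
theorem bowtie_F_fixed_ultrafilters (B : BowtieFn) (u : Ultrafilter ℕ)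
    (hu : Filter.cofinite ≤ (u : Filter ℕ)) :
    (∀ A : Set ℕ, A ∈ u → B.F A ∈ u) ↔ ∀ α < omega1, B.D α ∉ u := by
  have notfin : ∀ s : Set ℕ, s.Finite → s ∉ u := by
    intro s hs hsu
    have h1 : s ∈ Filter.cofinite := hu hsu
    rw [Filter.mem_cofinite] at h1
    exact hs.infinite_compl h1
  have hWit : ∀ A : Set ℕ, B.IsWitness A (B.delta A) := by
    intro A
    have hne : {δ | B.IsWitness A δ}.Nonempty := by
      obtain ⟨δ, h1, h2⟩ := B.guess A
      exact ⟨δ, h1, h2⟩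
    exact csInf_mem hne
  constructor
  · intro hF
    by_contra hcon
    push_neg at hcon
    obtain ⟨α₀, hα₀lt, hα₀⟩ := hcon
    set S := {α : Ordinal | α < omega1 ∧ B.D α ∈ u} with hS
    have hSne : S.Nonempty := ⟨α₀, hα₀lt, hα₀⟩
    set γ := sInf S with hγdef
    have hγS : γ ∈ S := csInf_mem hSne
    have hγlt : γ < omega1 := hγS.1
    have hγu : B.D γ ∈ u := hγS.2
    have hmin : ∀ β, β < γ → B.D β ∉ u := by
      intro β hβ hβu
      have hβS : β ∈ S := ⟨hβ.trans hγlt, hβu⟩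
      exact absurd (csInf_le' hβS) (not_le.mpr hβ)
    have hinj : Set.InjOn (B.f γ) (B.D γ) := (B.bijOn γ hγlt).injOn
    have hfp := B.fixedPointFree γ hγlt
    have hcol := bowtieCol_ne (B.D γ) (B.f γ) hinj hfp
    obtain ⟨i, hAu⟩ : ∃ i : Fin 3, {x ∈ B.D γ | bowtieCol (B.D γ) (B.f γ) x = i} ∈ u := by
      by_contra hno
      push_neg at hno
      have hc : ∀ i : Fin 3, {x ∈ B.D γ | bowtieCol (B.D γ) (B.f γ) x = i}ᶜ ∈ u := fun i =>
        Ultrafilter.compl_mem_iff_notMem.mpr (hno i)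
      have hint : B.D γ ∩ ({x ∈ B.D γ | bowtieCol (B.D γ) (B.f γ) x = 0}ᶜ ∩
          ({x ∈ B.D γ | bowtieCol (B.D γ) (B.f γ) x = 1}ᶜ ∩
           {x ∈ B.D γ | bowtieCol (B.D γ) (B.f γ) x = 2}ᶜ)) ∈ u :=
        Filter.inter_mem hγu (Filter.inter_mem (hc 0) (Filter.inter_mem (hc 1) (hc 2)))
      obtain ⟨x, hxD, hx0, hx1, hx2⟩ := Filter.nonempty_of_mem hint
      have h3 : ∀ j : Fin 3, j = 0 ∨ j = 1 ∨ j = 2 := by decide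
      rcases h3 (bowtieCol (B.D γ) (B.f γ) x) with h | h | h
      · exact hx0 ⟨hxD, h⟩
      · exact hx1 ⟨hxD, h⟩
      · exact hx2 ⟨hxD, h⟩
    set A := {x ∈ B.D γ | bowtieCol (B.D γ) (B.f γ) x = i} with hAdef
    have hAD : A ⊆ B.D γ := fun x hx => hx.1
    have hdisj : ∀ y ∈ B.f γ '' A, y ∉ A := by
      rintro y ⟨x, hxA, rfl⟩ hyA
      exact hcol x (hAD hxA) (by rw [hyA.2, hxA.2])
    have hW := hWit A
    set δ := B.delta A with hδdef
    have hδlt : δ < omega1 := hW.1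
    rcases lt_or_ge δ γ with hlt | hge
    · -- δ < γ : A \ D δ is both in u (hence infinite) and finite
      have hDδ : B.D δ ∉ u := hmin δ hlt
      have hAdiff : A \ B.D δ ∈ u := by
        rw [Set.diff_eq]
        exact Filter.inter_mem hAu (Ultrafilter.compl_mem_iff_notMem.mpr hDδ)
      have hEq := (hW.2 γ hlt.le hγlt).1
      have hset : (B.D γ \ B.D δ) ∩ A = A \ B.D δ := by
        ext x
        constructor
        · rintro ⟨⟨_, hxd⟩, hxA⟩; exact ⟨hxA, hxd⟩
        · rintro ⟨hxA, hxd⟩; exact ⟨⟨hAD hxA, hxd⟩, hxA⟩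
      rw [hset] at hEq
      have hfin : (A \ B.D δ).Finite := by
        refine hEq.subset ?_
        intro x hx
        right
        exact ⟨hx, fun hxin => hdisj x (Set.image_mono Set.diff_subset hxin) hx.1⟩
      exact notfin _ hfin hAdiff
    · -- γ ≤ δ : D δ ∈ u, and F A ∩ A lands in a finite set
      have hDδu : B.D δ ∈ u := by
        rcases eq_or_lt_of_le hge with heq | hlt'
        · rwa [← heq]
        · have hsub : (B.D γ \ B.D δ).Finite := B.sub γ δ hlt' hδlt
          by_contra hDδ
          refine notfin _ hsub ?_
          rw [Set.diff_eq]
          exact Filter.inter_mem hγu (Ultrafilter.compl_mem_iff_notMem.mpr hDδ)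
      have hFAu := hF A hAu
      have himg : B.f δ '' (A ∩ B.D δ) ∈ u := by
        rcases Ultrafilter.union_mem_iff.mp hFAu with h | h
        · exact h
        · exfalso
          obtain ⟨x, ⟨_, hxd⟩, hxD⟩ := Filter.nonempty_of_mem (Filter.inter_mem h hDδu)
          exact hxd hxD
      have hG : B.f δ '' (A ∩ B.D δ) ∩ A ∈ u := Filter.inter_mem himg hAu
      have hE : {x ∈ B.D γ | B.f γ x ≠ B.f δ x}.Finite := B.coherent γ δ hge hδlt
      have hGsub : B.f δ '' (A ∩ B.D δ) ∩ A ⊆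
          B.f δ '' {x ∈ B.D γ | B.f γ x ≠ B.f δ x} := by
        rintro y ⟨⟨x, ⟨hxA, hxD⟩, rfl⟩, hyA⟩
        by_cases hxe : B.f γ x = B.f δ x
        · exact absurd (hxe ▸ hyA) (hdisj _ ⟨x, hxA, rfl⟩)
        · exact ⟨x, ⟨hAD hxA, hxe⟩, rfl⟩
      exact notfin _ ((hE.image _).subset hGsub) hG
  · intro h A hA
    have hδ : B.D (B.delta A) ∉ u := h _ (hWit A).1
    have hAdiff : A \ B.D (B.delta A) ∈ u := by
      rw [Set.diff_eq]
      exact Filter.inter_mem hA (Ultrafilter.compl_mem_iff_notMem.mpr hδ)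
    exact Filter.mem_of_superset hAdiff Set.subset_union_right
end
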